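/- Let p₁, …, p₁₀ be the radial order with respect to a hull vertex p of an 11-point set P in general position, and suppose that for every index 1 ≤ i ≤ 8 the triangle p, pᵢ, p_{i+2} contains p_{i+1}. Then p₁p₂⋯p₁₀ is a convex polygon with no point of P in its interior; in particular p₁p₂p₃p₄p₅ is a 5-hole of P and the triangle p,p₁,p₂ is empty of points of P. -/

import Mathlib

open scoped Classical

noncomputable section

abbrev Pt : Type := EuclideanSpace ℝ (Fin 2)

/-- No three distinct points of `P` are collinear. -/
def GenPos (P : Set Pt) : Prop :=
  ∀ a ∈ P, ∀ b ∈ P, ∀ c ∈ P, a ≠ b → a ≠ c → b ≠ c → ¬ Collinear ℝ ({a, b, c} : Set Pt)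

/-- A set of points is in convex position if every point is an extreme point:
no point lies in the convex hull of the others. -/
def ConvexPos (S : Set Pt) : Prop := ∀ p ∈ S, p ∉ convexHull ℝ (S \ {p})

/-- The 5-holes of `P`: 5-element subsets of `P` in convex position whose
convex hull has no point of `P` in its interior. -/
def Holes5 (P : Set Pt) : Set (Finset Pt) :=
  {H | H.card = 5 ∧ ↑H ⊆ P ∧ ConvexPos ↑H ∧
    ∀ x ∈ P, x ∉ interior (convexHull ℝ (H : Set Pt))}

/-- Orientation determinant of the triple `(o, a, b)`. -/
def det2 (o a b : Pt) : ℝ :=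
  (a 0 - o 0) * (b 1 - o 1) - (a 1 - o 1) * (b 0 - o 0)

/-- `v` lists the vertices of a strictly convex polygon in cyclic order:
for every edge `v i v (i+1)`, all other vertices lie strictly on the same side. -/
def ConvexCyclicOrder {n : ℕ} [NeZero n] (v : Fin n → Pt) : Prop :=
  ∃ σ : ℝ, (σ = 1 ∨ σ = -1) ∧
    ∀ i j : Fin n, j ≠ i → j ≠ i + 1 → 0 < σ * det2 (v i) (v (i + 1)) (v j)

/-- `x` lies in the closed angular region at `p` spanned by the rays from `p`
through `a` and through `c` (the convex cone generated by the two rays). -/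
def InAngle (a p c x : Pt) : Prop :=
  ∃ s t : ℝ, 0 ≤ s ∧ 0 ≤ t ∧ x = p + s • (a - p) + t • (c - p)

/-- The extreme points (convex-hull vertices) of a planar point set. -/
def extremePts (P : Set Pt) : Set Pt := {p ∈ P | p ∉ convexHull ℝ (P \ {p})}

/-- What remains of `P` after peeling off the first `n` convex layers. -/
def layerRest (P : Set Pt) : ℕ → Set Pt
  | 0 => P
  | n + 1 => layerRest P n \ extremePts (layerRest P n)

/-- The `i`-th convex layer of `P` (0-indexed). -/
def layer (P : Set Pt) (i : ℕ) : Set Pt := extremePts (layerRest P i)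

/-- The number of convex layers of `P`. -/
def numLayers (P : Set Pt) : ℕ := {i | (layer P i).Nonempty}.ncard

/-! ### Auxiliary material -/

section Aux

lemma det2_cyc (o a b : Pt) : det2 o a b = det2 a b o := by unfold det2; ring
lemma det2_swap (o a b : Pt) : det2 o a b = - det2 o b a := by unfold det2; ring
lemma det2_cocycle (o a b c : Pt) : det2 a b c = det2 o b c - det2 o a c + det2 o a b := by
  unfold det2; ring
lemma det2_self_right (o a : Pt) : det2 o a a = 0 := by unfold det2; ring
lemma det2_self_left (o b : Pt) : det2 o o b = 0 := by unfold det2; ring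
lemma det2_self_mid (o a : Pt) : det2 o a o = 0 := by unfold det2; ring
lemma det2_aab (a b : Pt) : det2 a a b = 0 := by unfold det2; ring
lemma det2_aba (a b : Pt) : det2 a b a = 0 := by unfold det2; ring
lemma det2_abb (a b : Pt) : det2 a b b = 0 := by unfold det2; ring

lemma det2_lin (o a x : Pt) :
    det2 o a x = (-(a 1 - o 1)) * x 0 + (a 0 - o 0) * x 1 +
      ((a 1 - o 1) * o 0 - (a 0 - o 0) * o 1) := by unfold det2; ring

lemma pt_ext {x y : Pt} (h0 : x 0 = y 0) (h1 : x 1 = y 1) : x = y := by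
  refine PiLp.ext fun i => ?_; fin_cases i <;> assumption

lemma pt_ne_iff {x y : Pt} (h : x ≠ y) : x 0 ≠ y 0 ∨ x 1 ≠ y 1 := by
  by_contra hc
  push_neg at hc
  exact h (pt_ext hc.1 hc.2)

lemma collinear_of_det2 (a b c : Pt) (hab : a ≠ b) (h : det2 a b c = 0) :
    Collinear ℝ ({a, b, c} : Set Pt) := by
  rw [collinear_iff_of_mem (Set.mem_insert a {b, c})]
  refine ⟨b - a, ?_⟩
  intro q hq
  have key : ∀ r : ℝ, (r • (b - a) +ᵥ a : Pt) = r • (b - a) + a := fun r => rfl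
  rcases hq with rfl | rfl | rfl
  · exact ⟨0, by simp⟩
  · exact ⟨1, by simp⟩
  · unfold det2 at h
    rcases pt_ne_iff hab with hne | hne
    · have hba : b 0 - a 0 ≠ 0 := sub_ne_zero.mpr hne.symm
      refine ⟨(q 0 - a 0) / (b 0 - a 0), ?_⟩
      rw [key]
      apply pt_ext
      · show q 0 = (q 0 - a 0) / (b 0 - a 0) * (b 0 - a 0) + a 0
        field_simp
        ring
      · show q 1 = (q 0 - a 0) / (b 0 - a 0) * (b 1 - a 1) + a 1
        field_simp
        linear_combination h
    · have hba : b 1 - a 1 ≠ 0 := sub_ne_zero.mpr hne.symm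
      refine ⟨(q 1 - a 1) / (b 1 - a 1), ?_⟩
      rw [key]
      apply pt_ext
      · show q 0 = (q 1 - a 1) / (b 1 - a 1) * (b 0 - a 0) + a 0
        field_simp
        linear_combination -h
      · show q 1 = (q 1 - a 1) / (b 1 - a 1) * (b 1 - a 1) + a 1
        field_simp
        ring

lemma convex_lin_le (A B C : ℝ) : Convex ℝ {x : Pt | 0 ≤ A * x 0 + B * x 1 + C} := by
  intro x hx y hy s t hs ht hst
  simp only [Set.mem_setOf_eq] at *
  have h0 : (s • x + t • y) 0 = s * x 0 + t * y 0 := rfl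
  have h1 : (s • x + t • y) 1 = s * x 1 + t * y 1 := rfl
  have hC : s * C + t * C = C := by rw [← add_mul, hst, one_mul]
  rw [h0, h1]
  nlinarith [mul_nonneg hs hx, mul_nonneg ht hy]

lemma convex_lin_lt (A B C : ℝ) : Convex ℝ {x : Pt | 0 < A * x 0 + B * x 1 + C} := by
  intro x hx y hy s t hs ht hst
  simp only [Set.mem_setOf_eq] at *
  have h0 : (s • x + t • y) 0 = s * x 0 + t * y 0 := rfl
  have h1 : (s • x + t • y) 1 = s * x 1 + t * y 1 := rfl
  have hC : s * C + t * C = C := by rw [← add_mul, hst, one_mul]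
  rw [h0, h1]
  rcases hs.eq_or_lt with rfl | hs'
  · have : t = 1 := by linarith
    subst this; nlinarith
  · nlinarith [mul_pos hs' hx, mul_nonneg ht hy.le]

lemma hull_le (A B C : ℝ) (s : Set Pt) (h : ∀ y ∈ s, 0 ≤ A * y 0 + B * y 1 + C) :
    convexHull ℝ s ⊆ {x : Pt | 0 ≤ A * x 0 + B * x 1 + C} :=
  convexHull_min h (convex_lin_le A B C)

lemma hull_lt (A B C : ℝ) (s : Set Pt) (h : ∀ y ∈ s, 0 < A * y 0 + B * y 1 + C) :
    convexHull ℝ s ⊆ {x : Pt | 0 < A * x 0 + B * x 1 + C} :=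
  convexHull_min h (convex_lin_lt A B C)

lemma not_mem_interior_of_face (A B C : ℝ) (hAB : A ≠ 0 ∨ B ≠ 0) (s : Set Pt)
    (hs : ∀ y ∈ s, 0 ≤ A * y 0 + B * y 1 + C) (x : Pt)
    (hx0 : A * x 0 + B * x 1 + C = 0) : x ∉ interior (convexHull ℝ s) := by
  intro hx
  obtain ⟨δ, hδ, hball⟩ := Metric.isOpen_iff.mp isOpen_interior x hx
  set v : Pt := !₂[-A, -B] with hv
  have hv0 : v 0 = -A := rfl
  have hv1 : v 1 = -B := rfl
  have hABpos : 0 < A ^ 2 + B ^ 2 := by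
    rcases hAB with h | h <;> positivity
  have hvnorm : 0 ≤ ‖v‖ := norm_nonneg v
  set t : ℝ := δ / (2 * (‖v‖ + 1)) with htdef
  have ht : 0 < t := by positivity
  have hy : x + t • v ∈ Metric.ball x δ := by
    rw [Metric.mem_ball, dist_self_add_left, norm_smul]
    calc ‖t‖ * ‖v‖ ≤ t * (‖v‖ + 1) := by rw [Real.norm_eq_abs, abs_of_pos ht]; nlinarith
      _ = δ * (‖v‖+1) / (2 * (‖v‖ + 1)) := by rw [htdef]; ring
      _ < δ := by rw [div_lt_iff₀ (by positivity)]; nlinarith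
  have hmem := interior_subset (hball hy)
  have := hull_le A B C s hs hmem
  simp only [Set.mem_setOf_eq] at this
  have e0 : (x + t • v) 0 = x 0 + t * v 0 := rfl
  have e1 : (x + t • v) 1 = x 1 + t * v 1 := rfl
  rw [e0, e1, hv0, hv1] at this
  nlinarith

/-- supporting-edge tools: everything on one closed side -/
lemma face_le (a b : Pt) (σ : ℝ) (s : Set Pt)
    (hs : ∀ z ∈ s, 0 ≤ σ * det2 a b z) :
    ∀ w ∈ convexHull ℝ s, 0 ≤ σ * det2 a b w := by
  intro w hw
  have := hull_le (σ * (-(b 1 - a 1))) (σ * (b 0 - a 0))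
    (σ * ((b 1 - a 1) * a 0 - (b 0 - a 0) * a 1)) s ?_ hw
  · simp only [Set.mem_setOf_eq] at this
    calc (0:ℝ) ≤ _ := this
      _ = σ * det2 a b w := by rw [det2_lin a b w]; ring
  · intro z hz
    calc (0:ℝ) ≤ σ * det2 a b z := hs z hz
      _ = _ := by rw [det2_lin a b z]; ring

lemma face_not_mem (a b : Pt) (σ : ℝ) (s : Set Pt)
    (hs : ∀ z ∈ s, 0 ≤ σ * det2 a b z) (x : Pt) (hx : σ * det2 a b x < 0) :
    x ∉ convexHull ℝ s := fun h => absurd (face_le a b σ s hs x h) (by linarith)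

lemma face_not_interior (a b : Pt) (σ : ℝ) (hσ : σ = 1 ∨ σ = -1) (hab : a ≠ b) (s : Set Pt)
    (hs : ∀ z ∈ s, 0 ≤ σ * det2 a b z) (x : Pt) (hx : σ * det2 a b x = 0) :
    x ∉ interior (convexHull ℝ s) := by
  have hσne : σ ≠ 0 := by rcases hσ with rfl | rfl <;> norm_num
  apply not_mem_interior_of_face (σ * (-(b 1 - a 1))) (σ * (b 0 - a 0))
    (σ * ((b 1 - a 1) * a 0 - (b 0 - a 0) * a 1)) ?_ s ?_ x ?_
  · by_contra hc
    push_neg at hc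
    have h1 : b 1 = a 1 := by
      have := hc.1
      have : σ * (-(b 1 - a 1)) = 0 := hc.1
      rcases mul_eq_zero.mp this with h | h
      · exact absurd h hσne
      · linarith
    have h0 : b 0 = a 0 := by
      rcases mul_eq_zero.mp hc.2 with h | h
      · exact absurd h hσne
      · linarith
    exact hab (pt_ext h0.symm h1.symm)
  · intro z hz
    calc (0:ℝ) ≤ σ * det2 a b z := hs z hz
      _ = _ := by rw [det2_lin a b z]; ring
  · rw [← hx, det2_lin a b x]; ring

/-- vertex of a polygon excluded from hull of other points via two supporting edges -/
lemma vertex_not_in_hull (a b c : Pt) (σ : ℝ) (s : Set Pt)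
    (hs : ∀ z ∈ s, 0 < σ * (det2 a b z + det2 b c z)) :
    b ∉ convexHull ℝ s := by
  intro hmem
  have := hull_lt (σ * (-(b 1 - a 1)) + σ * (-(c 1 - b 1)))
      (σ * (b 0 - a 0) + σ * (c 0 - b 0))
      (σ * ((b 1 - a 1) * a 0 - (b 0 - a 0) * a 1) + σ * ((c 1 - b 1) * b 0 - (c 0 - b 0) * b 1))
      s ?_ hmem
  · simp only [Set.mem_setOf_eq] at this
    have hzero : σ * (det2 a b b + det2 b c b) = 0 := by
      rw [det2_abb, det2_aba]; ring
    have : (0:ℝ) < σ * (det2 a b b + det2 b c b) := by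
      calc (0:ℝ) < _ := this
        _ = σ * (det2 a b b + det2 b c b) := by rw [det2_lin a b b, det2_lin b c b]; ring
    linarith
  · intro z hz
    calc (0:ℝ) < σ * (det2 a b z + det2 b c z) := hs z hz
      _ = _ := by rw [det2_lin a b z, det2_lin b c z]; ring

def Dxy (x y : ℕ → ℝ) (i j : ℕ) : ℝ := x i * y j - y i * x j
def Exy (x y : ℕ → ℝ) (i j k : ℕ) : ℝ := Dxy x y j k - Dxy x y i k + Dxy x y i j
def ChD (x y : ℕ → ℝ) (i j : ℕ) : ℝ := (Dxy x y i 9 - Dxy x y j 9) / Dxy x y i j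

lemma pluck (x y : ℕ → ℝ) (i j k l : ℕ) :
    Dxy x y i j * Dxy x y k l - Dxy x y i k * Dxy x y j l + Dxy x y i l * Dxy x y j k = 0 := by
  simp only [Dxy]; ring

lemma Ekey (x y : ℕ → ℝ) (i j k : ℕ) :
    Exy x y i j k * Dxy x y j 9 =
      (Dxy x y j 9 - Dxy x y k 9) * Dxy x y i j - (Dxy x y i 9 - Dxy x y j 9) * Dxy x y j k := by
  simp only [Exy, Dxy]; ring

lemma core (x y : ℕ → ℝ) (ε : ℝ) (hε : ε = 1 ∨ ε = -1)
    (hpos : ∀ i j, i < j → j ≤ 9 → 0 < ε * Dxy x y i j)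
    (hcons : ∀ i, i ≤ 7 → 0 < -ε * Exy x y i (i+1) (i+2)) :
    ∀ i j k, i < j → j < k → k ≤ 9 → 0 < -ε * Exy x y i j k := by
  have hε2 : ε * ε = 1 := by rcases hε with rfl | rfl <;> norm_num
  have hεne : ε ≠ 0 := by rcases hε with rfl | rfl <;> norm_num
  have hmulε : ∀ a b : ℝ, (ε * a) * (ε * b) = a * b := by
    intro a b; rw [mul_mul_mul_comm, hε2, one_mul]
  have hDne : ∀ i j, i < j → j ≤ 9 → Dxy x y i j ≠ 0 := by
    intro i j h1 h2 h
    have := hpos i j h1 h2; rw [h, mul_zero] at this; exact lt_irrefl _ this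
  have hchrep : ∀ i j, ChD x y i j = (ε * (Dxy x y i 9 - Dxy x y j 9)) / (ε * Dxy x y i j) := by
    intro i j; rw [mul_div_mul_left _ _ hεne]; rfl
  have hchmul : ∀ i j, i < j → j ≤ 9 → ChD x y i j * Dxy x y i j = Dxy x y i 9 - Dxy x y j 9 := by
    intro i j h1 h2; exact div_mul_cancel₀ _ (hDne i j h1 h2)
  have F1 : ∀ i j k, i < j → j < k → k ≤ 8 →
      (0 < -ε * Exy x y i j k ↔ ChD x y j k < ChD x y i j) := by
    intro i j k h1 h2 h3
    have hd1 : 0 < ε * Dxy x y i j := hpos i j h1 (by omega)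
    have hd2 : 0 < ε * Dxy x y j k := hpos j k h2 (by omega)
    have hd3 : 0 < ε * Dxy x y j 9 := hpos j 9 (by omega) (by omega)
    have hkey := Ekey x y i j k
    rw [hchrep j k, hchrep i j, div_lt_div_iff₀ hd2 hd1]
    constructor
    · intro h
      nlinarith [mul_pos h hd3]
    · intro h
      have h' : 0 < -(Exy x y i j k * Dxy x y j 9) := by nlinarith
      nlinarith [mul_pos hd3 (mul_pos hd1 hd2)]
  have F2 : ∀ i j, i < j → j ≤ 8 →
      (0 < -ε * Exy x y i j 9 ↔ 1 < ChD x y i j) := by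
    intro i j h1 h2
    have hd1 : 0 < ε * Dxy x y i j := hpos i j h1 (by omega)
    rw [hchrep i j, lt_div_iff₀ hd1, one_mul]
    have key : -ε * Exy x y i j 9 =
        ε * (Dxy x y i 9 - Dxy x y j 9) - ε * Dxy x y i j := by
      have h' : Exy x y i j 9 = Dxy x y j 9 - Dxy x y i 9 + Dxy x y i j := rfl
      rw [h']; ring
    constructor <;> intro h <;> linarith
  set m : ℕ → ℝ := fun a => ChD x y a (a+1) with hm
  have hbeta : ∀ a, a ≤ 6 → m (a+1) < m a := by
    intro a ha
    exact (F1 a (a+1) (a+2) (by omega) (by omega) (by omega)).mp (hcons a (by omega))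
  have hmono : ∀ a b, a ≤ b → b ≤ 7 → m b ≤ m a := by
    intro a b hab hb
    induction b with
    | zero => have : a = 0 := by omega
              subst this; exact le_refl _
    | succ n ih =>
      rcases Nat.lt_or_ge a (n+1) with h | h
      · have h1 := hbeta n (by omega)
        have h2 := ih (by omega) (by omega)
        linarith
      · have : a = n + 1 := by omega
        subst this; exact le_refl _
  have low : ∀ g i j, i < j → j ≤ 8 → j - i ≤ g + 1 → m (j-1) ≤ ChD x y i j := by
    intro g
    induction g with
    | zero =>
      intro i j h1 h2 h3
      have hj : j = i + 1 := by omega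
      subst hj
      have : i + 1 - 1 = i := by omega
      rw [this]
    | succ g ih =>
      intro i j h1 h2 h3
      rcases Nat.lt_or_ge (i+1) j with h4 | h4
      · have cm1 := hchmul i j h1 (by omega)
        have cm2 := hchmul i (i+1) (by omega) (by omega)
        have cm3 := hchmul (i+1) j h4 (by omega)
        set P : ℝ := (ε * Dxy x y i j) * (ε * Dxy x y (i+1) 9) with hP
        set Q : ℝ := (ε * Dxy x y i (i+1)) * (ε * Dxy x y j 9) with hQ
        set R : ℝ := (ε * Dxy x y (i+1) j) * (ε * Dxy x y i 9) with hR
        have hPpos : 0 < P := mul_pos (hpos i j h1 (by omega)) (hpos (i+1) 9 (by omega) (by omega))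
        have hQpos : 0 < Q := mul_pos (hpos i (i+1) (by omega) (by omega)) (hpos j 9 (by omega) (by omega))
        have hRpos : 0 < R := mul_pos (hpos (i+1) j h4 (by omega)) (hpos i 9 (by omega) (by omega))
        have hPQR : P = Q + R := by
          rw [hP, hQ, hR, hmulε, hmulε, hmulε]
          linear_combination -pluck x y i (i+1) j 9
        have emain : ChD x y i j * P = m i * Q + ChD x y (i+1) j * R := by
          rw [hP, hQ, hR, hmulε, hmulε, hmulε, hm]
          linear_combination Dxy x y (i+1) 9 * cm1 - Dxy x y j 9 * cm2 - Dxy x y i 9 * cm3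
        have hIH : m (j-1) ≤ ChD x y (i+1) j := ih (i+1) j h4 h2 (by omega)
        have hmi : m (j-1) ≤ m i := hmono i (j-1) (by omega) (by omega)
        have t1 : m (j-1) * Q ≤ m i * Q := mul_le_mul_of_nonneg_right hmi hQpos.le
        have t2 : m (j-1) * R ≤ ChD x y (i+1) j * R := mul_le_mul_of_nonneg_right hIH hRpos.le
        have : m (j-1) * P ≤ ChD x y i j * P := by
          calc m (j-1) * P = m (j-1) * Q + m (j-1) * R := by rw [hPQR]; ring
            _ ≤ m i * Q + ChD x y (i+1) j * R := add_le_add t1 t2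
            _ = ChD x y i j * P := emain.symm
        exact le_of_mul_le_mul_right this hPpos
      · have hj : j = i + 1 := by omega
        subst hj
        have : i + 1 - 1 = i := by omega
        rw [this]
  have high : ∀ g j k, j < k → k ≤ 8 → k - j ≤ g + 1 → ChD x y j k ≤ m j := by
    intro g
    induction g with
    | zero =>
      intro j k h1 h2 h3
      have hk : k = j + 1 := by omega
      subst hk; exact le_refl _
    | succ g ih =>
      intro j k h1 h2 h3
      rcases Nat.lt_or_ge (j+1) k with h4 | h4
      · have cm1 := hchmul j k h1 (by omega)
        have cm2 := hchmul j (k-1) (by omega) (by omega)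
        have cm3 := hchmul (k-1) k (by omega) (by omega)
        have hk1 : k - 1 + 1 = k := by omega
        set P : ℝ := (ε * Dxy x y j k) * (ε * Dxy x y (k-1) 9) with hP
        set Q : ℝ := (ε * Dxy x y j (k-1)) * (ε * Dxy x y k 9) with hQ
        set R : ℝ := (ε * Dxy x y (k-1) k) * (ε * Dxy x y j 9) with hR
        have hPpos : 0 < P := mul_pos (hpos j k h1 (by omega)) (hpos (k-1) 9 (by omega) (by omega))
        have hQpos : 0 < Q := mul_pos (hpos j (k-1) (by omega) (by omega)) (hpos k 9 (by omega) (by omega))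
        have hRpos : 0 < R := mul_pos (hpos (k-1) k (by omega) (by omega)) (hpos j 9 (by omega) (by omega))
        have hPQR : P = Q + R := by
          rw [hP, hQ, hR, hmulε, hmulε, hmulε]
          linear_combination -pluck x y j (k-1) k 9
        have emain : ChD x y j k * P = ChD x y j (k-1) * Q + m (k-1) * R := by
          rw [hP, hQ, hR, hmulε, hmulε, hmulε, hm]
          simp only [hk1]
          linear_combination Dxy x y (k-1) 9 * cm1 - Dxy x y k 9 * cm2 - Dxy x y j 9 * cm3
        have hIH : ChD x y j (k-1) ≤ m j := ih j (k-1) (by omega) (by omega) (by omega)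
        have hmk : m (k-1) ≤ m j := hmono j (k-1) (by omega) (by omega)
        have t1 : ChD x y j (k-1) * Q ≤ m j * Q := mul_le_mul_of_nonneg_right hIH hQpos.le
        have t2 : m (k-1) * R ≤ m j * R := mul_le_mul_of_nonneg_right hmk hRpos.le
        have : ChD x y j k * P ≤ m j * P := by
          calc ChD x y j k * P = ChD x y j (k-1) * Q + m (k-1) * R := emain
            _ ≤ m j * Q + m j * R := add_le_add t1 t2
            _ = m j * P := by rw [hPQR]; ring
        exact le_of_mul_le_mul_right this hPpos
      · have hk : k = j + 1 := by omega
        subst hk; exact le_refl _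
  intro i j k h1 h2 h3
  rcases Nat.lt_or_ge k 9 with h9 | h9
  · apply (F1 i j k h1 h2 (by omega)).mpr
    have l1 : m (j-1) ≤ ChD x y i j := low 9 i j h1 (by omega) (by omega)
    have l2 : ChD x y j k ≤ m j := high 9 j k h2 (by omega) (by omega)
    have l3 : m j < m (j-1) := by
      have := hbeta (j-1) (by omega)
      have hj : j - 1 + 1 = j := by omega
      rwa [hj] at this
    linarith
  · have hk : k = 9 := by omega
    subst hk
    apply (F2 i j h1 (by omega)).mpr
    have l1 : m (j-1) ≤ ChD x y i j := low 9 i j h1 (by omega) (by omega)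
    have l2 : m 7 ≤ m (j-1) := hmono (j-1) 7 (by omega) (by omega)
    have l3 : 1 < m 7 := (F2 7 8 (by omega) (by omega)).mp (hcons 7 (by omega))
    linarith

end Aux

/-- let `f 0, …, f 9` be the radial order around a hull vertex
`p` of an 11-point set `P` in general position, and suppose each triangle
`p, f i, f (i+2)` contains `f (i+1)`. Then `f 0 ⋯ f 9` is a convex polygon
with no point of `P` in its interior; in particular `{f 0, …, f 4}` is a
5-hole of `P` and the triangle `p, f 0, f 1` contains no point of `P` other
than its vertices. -/
theorem stmt11 (P : Finset Pt) (h11 : P.card = 11) (hgp : GenPos ↑P)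
    (p : Pt) (hp : p ∈ P) (hext : p ∉ convexHull ℝ ((↑P : Set Pt) \ {p}))
    (f : Fin 10 → Pt) (hinj : Function.Injective f)
    (hrange : Set.range f = (↑P : Set Pt) \ {p})
    (horder : ∀ i j k : Fin 10, i < j → j < k → InAngle (f i) p (f k) (f j))
    (hangle : EuclideanGeometry.angle (f 0) p (f 9) < Real.pi)
    (hcontain : ∀ i : Fin 10, i.val ≤ 7 →
      f (i + 1) ∈ convexHull ℝ ({p, f i, f (i + 2)} : Set Pt)) :
    (ConvexCyclicOrder f ∧
      ∀ x ∈ (↑P : Set Pt), x ∉ interior (convexHull ℝ (Set.range f))) ∧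
    ({f 0, f 1, f 2, f 3, f 4} : Finset Pt) ∈ Holes5 (↑P : Set Pt) ∧
    (∀ x ∈ (↑P : Set Pt), x ∈ convexHull ℝ ({p, f 0, f 1} : Set Pt) →
      x ∈ ({p, f 0, f 1} : Set Pt)) := by
  classical
  have hmemP : ∀ i : Fin 10, (f i : Pt) ∈ (↑P : Set Pt) := by
    intro i
    have : f i ∈ Set.range f := ⟨i, rfl⟩
    rw [hrange] at this; exact this.1
  have hfnp : ∀ i : Fin 10, f i ≠ p := by
    intro i
    have : f i ∈ Set.range f := ⟨i, rfl⟩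
    rw [hrange] at this
    simpa using this.2
  have hpP : p ∈ (↑P : Set Pt) := hp
  have hfne : ∀ i j : Fin 10, i ≠ j → f i ≠ f j := fun i j h hc => h (hinj hc)
  have hDne : ∀ i j : Fin 10, i ≠ j → det2 p (f i) (f j) ≠ 0 := by
    intro i j hij h
    exact hgp p hpP (f i) (hmemP i) (f j) (hmemP j) (hfnp i).symm (hfnp j).symm (hfne i j hij)
      (collinear_of_det2 _ _ _ (hfnp i).symm h)
  have hTne : ∀ i j k : Fin 10, i ≠ j → i ≠ k → j ≠ k → det2 (f i) (f j) (f k) ≠ 0 := by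
    intro i j k h1 h2 h3 h
    exact hgp (f i) (hmemP i) (f j) (hmemP j) (f k) (hmemP k) (hfne i j h1) (hfne i k h2)
      (hfne j k h3) (collinear_of_det2 _ _ _ (hfne i j h1) h)
  -- the InAngle decompositions, at the level of `f`
  have hIA : ∀ I J K : Fin 10, I < J → J < K →
      ∃ s t : ℝ, 0 ≤ s ∧ 0 ≤ t ∧
        det2 p (f I) (f J) = t * det2 p (f I) (f K) ∧
        det2 p (f J) (f K) = s * det2 p (f I) (f K) := by
    intro I J K h1 h2
    obtain ⟨s, t, hs, ht, heq⟩ := horder I J K h1 h2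
    have h0 : f J 0 = p 0 + s * (f I 0 - p 0) + t * (f K 0 - p 0) := by
      rw [heq]; rfl
    have h1' : f J 1 = p 1 + s * (f I 1 - p 1) + t * (f K 1 - p 1) := by
      rw [heq]; rfl
    refine ⟨s, t, hs, ht, ?_, ?_⟩ <;>
      · simp only [det2]
        rw [h0, h1']
        ring
  -- sign normalization
  set ε : ℝ := if 0 < det2 p (f 0) (f 9) then 1 else -1 with hεd
  have hεpm : ε = 1 ∨ ε = -1 := by rw [hεd]; split <;> simp
  have hεc : 0 < ε * det2 p (f 0) (f 9) := by
    rcases lt_trichotomy (det2 p (f 0) (f 9)) 0 with h | h | h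
    · rw [hεd, if_neg (by linarith)]; linarith
    · exact absurd h (hDne 0 9 (by decide))
    · rw [hεd, if_pos h]; nlinarith
  -- radial positivity at the level of `f`
  have hposF : ∀ I J : Fin 10, I < J → 0 < ε * det2 p (f I) (f J) := by
    have nine : (⟨9, by omega⟩ : Fin 10) = 9 := rfl
    have zero : (⟨0, by omega⟩ : Fin 10) = 0 := rfl
    have mid : ∀ I : Fin 10, 0 < I → I < 9 → 0 < ε * det2 p (f I) (f 9) := by
      intro I hI0 hI9
      obtain ⟨s, t, hs, ht, e1, e2⟩ := hIA 0 I 9 hI0 hI9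
      have hne := hDne I 9 (ne_of_lt hI9)
      rcases hs.eq_or_lt with rfl | hs'
      · rw [e2, zero_mul] at hne; exact absurd rfl hne
      · rw [e2]; calc (0:ℝ) < s * (ε * det2 p (f 0) (f 9)) := by positivity
          _ = ε * (s * det2 p (f 0) (f 9)) := by ring
    intro I J hIJ
    by_cases hI0 : I = 0
    · subst hI0
      by_cases hJ9 : J = 9
      · subst hJ9; exact hεc
      · have hJ9' : J < 9 := lt_of_le_of_ne (by omega) hJ9
        obtain ⟨s, t, hs, ht, e1, e2⟩ := hIA 0 J 9 hIJ hJ9'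
        have hne' := hDne 0 J (by omega)
        rcases ht.eq_or_lt with rfl | ht'
        · rw [e1, zero_mul] at hne'; exact absurd rfl hne'
        · rw [e1]; calc (0:ℝ) < t * (ε * det2 p (f 0) (f 9)) := by positivity
            _ = ε * (t * det2 p (f 0) (f 9)) := by ring
    · have hI0' : (0 : Fin 10) < I := by omega
      by_cases hJ9 : J = 9
      · subst hJ9; exact mid I hI0' hIJ
      · have hJ9' : J < 9 := lt_of_le_of_ne (by omega) hJ9
        obtain ⟨s, t, hs, ht, e1, e2⟩ := hIA I J 9 hIJ hJ9'
        have hne' := hDne I J (ne_of_lt hIJ)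
        rcases ht.eq_or_lt with rfl | ht'
        · rw [e1, zero_mul] at hne'; exact absurd rfl hne'
        · have hI9 := mid I hI0' (by omega)
          rw [e1]; calc (0:ℝ) < t * (ε * det2 p (f I) (f 9)) := by positivity
            _ = ε * (t * det2 p (f I) (f 9)) := by ring
  -- consecutive triples
  have hconsF : ∀ I : Fin 10, I.val ≤ 7 → 0 < -ε * det2 (f I) (f (I+1)) (f (I+2)) := by
    intro I hI
    have hc := hcontain I hI
    have hne2 : ({f I, f (I+2)} : Set Pt).Nonempty := ⟨f I, Set.mem_insert _ _⟩
    rw [convexHull_insert hne2, mem_convexJoin] at hc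
    obtain ⟨a, ha, b, hb, hseg⟩ := hc
    rw [convexHull_pair] at hb
    rw [Set.mem_singleton_iff] at ha
    rw [ha] at hseg
    obtain ⟨u, v, hu, hv, huv, hbeq⟩ := hb
    obtain ⟨mm, n, hm, hn, hmn, hfeq⟩ := hseg
    have hb0 : b 0 = u * f I 0 + v * f (I+2) 0 := by rw [← hbeq]; rfl
    have hb1 : b 1 = u * f I 1 + v * f (I+2) 1 := by rw [← hbeq]; rfl
    have hf0 : f (I+1) 0 = mm * p 0 + n * (u * f I 0 + v * f (I+2) 0) := by
      rw [← hb0, ← hfeq]; rfl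
    have hf1 : f (I+1) 1 = mm * p 1 + n * (u * f I 1 + v * f (I+2) 1) := by
      rw [← hb1, ← hfeq]; rfl
    rw [show mm = 1 - n by linarith, show v = 1 - u by linarith] at hf0 hf1
    have hd01 : I ≠ I + 1 := by omega
    have hd02 : I ≠ I + 2 := by omega
    have hd12 : I + 1 ≠ I + 2 := by omega
    have hEne := hTne I (I+1) (I+2) hd01 hd02 hd12
    have hD := hposF I (I+2) (by omega)
    have hEid : det2 (f I) (f (I+1)) (f (I+2)) =
        (n - 1) * det2 p (f I) (f (I+2)) := by
      simp only [det2]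
      rw [hf0, hf1]
      ring
    have hαne : n - 1 ≠ 0 := by
      intro h
      rw [h, zero_mul] at hEid
      exact hEne hEid
    have hα' : 0 < 1 - n := by
      rcases (show n ≤ 1 by linarith).eq_or_lt with h | h
      · exact absurd (by linarith) hαne
      · linarith
    rw [hEid]
    calc (0:ℝ) < (1 - n) * (ε * det2 p (f I) (f (I+2))) := mul_pos hα' hD
      _ = -ε * ((n - 1) * det2 p (f I) (f (I+2))) := by ring
  -- pass to ℕ-indexed scalar world
  set fn : ℕ → Pt := fun n => f ⟨n % 10, Nat.mod_lt n (by norm_num)⟩ with hfnd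
  have hfnn : ∀ (n : ℕ) (h : n < 10), fn n = f ⟨n, h⟩ := by
    intro n h
    rw [hfnd]
    show f ⟨n % 10, Nat.mod_lt n (by norm_num)⟩ = f ⟨n, h⟩
    exact congrArg f (Fin.ext (by simpa using Nat.mod_eq_of_lt h))
  have hfnv : ∀ i : Fin 10, fn i.val = f i := by
    intro i
    rw [hfnn i.val i.isLt]
  set x : ℕ → ℝ := fun n => fn n 0 - p 0 with hxd
  set y : ℕ → ℝ := fun n => fn n 1 - p 1 with hyd
  have hDxy : ∀ a b : ℕ, Dxy x y a b = det2 p (fn a) (fn b) := by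
    intro a b
    simp only [hxd, hyd, Dxy, det2]
  have hExy : ∀ a b c : ℕ, Exy x y a b c = det2 (fn a) (fn b) (fn c) := by
    intro a b c
    rw [det2_cocycle p (fn a) (fn b) (fn c)]
    simp only [Exy, hDxy]
  have hpos : ∀ i j : ℕ, i < j → j ≤ 9 → 0 < ε * Dxy x y i j := by
    intro i j h1 h2
    rw [hDxy, hfnn i (by omega), hfnn j (by omega)]
    exact hposF ⟨i, by omega⟩ ⟨j, by omega⟩ (Fin.mk_lt_mk.mpr h1)
  have hcons : ∀ i : ℕ, i ≤ 7 → 0 < -ε * Exy x y i (i+1) (i+2) := by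
    intro i hi
    rw [hExy, hfnn i (by omega), hfnn (i+1) (by omega), hfnn (i+2) (by omega)]
    have e1 : (⟨i+1, by omega⟩ : Fin 10) = ⟨i, by omega⟩ + 1 := by
      apply Fin.ext
      simp [Fin.val_add]
      omega
    have e2 : (⟨i+2, by omega⟩ : Fin 10) = ⟨i, by omega⟩ + 2 := by
      apply Fin.ext
      simp [Fin.val_add]
      omega
    rw [e1, e2]
    exact hconsF ⟨i, by omega⟩ (by simpa using hi)
  have hEall := core x y ε hεpm hpos hcons
  -- all triples, at the level of `f`
  have hEfF : ∀ I J K : Fin 10, I < J → J < K → 0 < -ε * det2 (f I) (f J) (f K) := by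
    intro I J K h1 h2
    have := hEall I.val J.val K.val (by omega) (by omega) (by omega)
    rwa [hExy, hfnv I, hfnv J, hfnv K] at this
  -- orientation sign
  set σ : ℝ := -ε with hσd
  have hσpm : σ = 1 ∨ σ = -1 := by
    rcases hεpm with h | h
    · right; rw [hσd, h]
    · left; rw [hσd, h]; norm_num
  have hE1 : ∀ a b c : Fin 10, a < b → b < c → 0 < σ * det2 (f a) (f b) (f c) := by
    intro a b c h1 h2; rw [hσd]; exact hEfF a b c h1 h2
  have hE2 : ∀ a b c : Fin 10, a < b → b < c → 0 < σ * det2 (f b) (f c) (f a) := by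
    intro a b c h1 h2
    rw [det2_cyc (f b) (f c) (f a), det2_cyc (f c) (f a) (f b)]
    exact hE1 a b c h1 h2
  have hE3 : ∀ a b c : Fin 10, a < b → b < c → 0 < σ * det2 (f c) (f a) (f b) := by
    intro a b c h1 h2
    rw [det2_cyc (f c) (f a) (f b)]
    exact hE1 a b c h1 h2
  -- every edge supports the polygon
  have hedgeAll : ∀ i j : Fin 10, j ≠ i → j ≠ i + 1 → 0 < σ * det2 (f i) (f (i+1)) (f j) := by
    intro i j hji hji1
    by_cases h9 : i.val ≤ 8
    · have hi1 : (i+1).val = i.val + 1 := by omega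
      rcases Nat.lt_trichotomy j.val i.val with h | h | h
      · exact hE2 j i (i+1) (by omega) (by omega)
      · exact absurd (Fin.ext h) hji
      · have hj1 : i.val + 1 ≠ j.val := by
          intro hc
          exact hji1 (Fin.ext (by omega))
        exact hE1 i (i+1) j (by omega) (by omega)
    · have h9' : i.val = 9 := by omega
      have hi : i = (9 : Fin 10) := Fin.ext (by omega)
      rw [hi] at hji1 hji ⊢
      rw [show (9 : Fin 10) + 1 = 0 by decide] at hji1 ⊢
      exact hE3 0 j 9 (by omega) (by omega)
  have hedge_nonneg : ∀ e l : Fin 10, 0 ≤ σ * det2 (f e) (f (e+1)) (f l) := by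
    intro e l
    by_cases h1 : l = e
    · subst h1; rw [det2_aba, mul_zero]
    · by_cases h2 : l = e + 1
      · subst h2; rw [det2_abb, mul_zero]
      · exact (hedgeAll e l h1 h2).le
  have hsRange : ∀ e : Fin 10, ∀ w ∈ Set.range f, 0 ≤ σ * det2 (f e) (f (e+1)) w := by
    rintro e w ⟨l, rfl⟩
    exact hedge_nonneg e l
  -- p is strictly outside each supporting halfplane through (f 0, f 1)
  have hp01 : σ * det2 (f 0) (f (0+1)) p < 0 := by
    rw [show (0 : Fin 10) + 1 = 1 by decide, ← det2_cyc p (f 0) (f 1), hσd]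
    have := hposF 0 1 (by decide)
    linarith
  -- members of P are p or in range f
  have hPmem : ∀ z, z ∈ (↑P : Set Pt) → z ≠ p → ∃ k : Fin 10, z = f k := by
    intro z hz hzp
    have : z ∈ Set.range f := by
      rw [hrange]; exact ⟨hz, hzp⟩
    obtain ⟨k, hk⟩ := this
    exact ⟨k, hk.symm⟩
  -- ########## goal 1: convex cyclic order and empty interior
  have goal1b : ∀ z ∈ (↑P : Set Pt), z ∉ interior (convexHull ℝ (Set.range f)) := by
    intro z hz
    by_cases hzp : z = p
    · subst hzp
      intro hint
      exact face_not_mem (f 0) (f (0+1)) σ _ (hsRange 0) z hp01 (interior_subset hint)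
    · obtain ⟨k, rfl⟩ := hPmem z hz hzp
      apply face_not_interior (f k) (f (k+1)) σ hσpm (hfne k (k+1) (by omega)) _ (hsRange k)
      rw [det2_aba, mul_zero]
  -- ########## goal 2: the 5-hole
  have hHmem : ∀ w ∈ (↑({f 0, f 1, f 2, f 3, f 4} : Finset Pt) : Set Pt),
      ∃ l : Fin 10, w = f l ∧ l.val ≤ 4 := by
    intro w hw
    simp only [Finset.coe_insert, Finset.coe_singleton, Set.mem_insert_iff,
      Set.mem_singleton_iff] at hw
    rcases hw with rfl | rfl | rfl | rfl | rfl
    · exact ⟨0, rfl, by decide⟩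
    · exact ⟨1, rfl, by decide⟩
    · exact ⟨2, rfl, by decide⟩
    · exact ⟨3, rfl, by decide⟩
    · exact ⟨4, rfl, by decide⟩
  have hsH : ∀ e : Fin 10, ∀ w ∈ (↑({f 0, f 1, f 2, f 3, f 4} : Finset Pt) : Set Pt),
      0 ≤ σ * det2 (f e) (f (e+1)) w := by
    intro e w hw
    obtain ⟨l, rfl, _⟩ := hHmem w hw
    exact hedge_nonneg e l
  have hs40 : ∀ w ∈ (↑({f 0, f 1, f 2, f 3, f 4} : Finset Pt) : Set Pt),
      0 ≤ σ * det2 (f 4) (f 0) w := by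
    intro w hw
    obtain ⟨l, rfl, hl⟩ := hHmem w hw
    have hcases : l = 0 ∨ l = 1 ∨ l = 2 ∨ l = 3 ∨ l = 4 := by omega
    rcases hcases with rfl | rfl | rfl | rfl | rfl
    · rw [det2_abb, mul_zero]
    · rw [det2_cyc (f 4) (f 0) (f 1)]
      exact (hE1 0 1 4 (by decide) (by decide)).le
    · rw [det2_cyc (f 4) (f 0) (f 2)]
      exact (hE1 0 2 4 (by decide) (by decide)).le
    · rw [det2_cyc (f 4) (f 0) (f 3)]
      exact (hE1 0 3 4 (by decide) (by decide)).le
    · rw [det2_aba, mul_zero]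
  have goal2 : ({f 0, f 1, f 2, f 3, f 4} : Finset Pt) ∈ Holes5 (↑P : Set Pt) := by
    refine ⟨?_, ?_, ?_, ?_⟩
    · -- cardinality
      rw [Finset.card_insert_of_notMem, Finset.card_insert_of_notMem,
        Finset.card_insert_of_notMem, Finset.card_insert_of_notMem, Finset.card_singleton]
      all_goals simp [hfne 3 4 (by decide), hfne 2 3 (by decide), hfne 2 4 (by decide),
        hfne 1 2 (by decide), hfne 1 3 (by decide), hfne 1 4 (by decide),
        hfne 0 1 (by decide), hfne 0 2 (by decide), hfne 0 3 (by decide),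
        hfne 0 4 (by decide)]
    · -- subset
      intro w hw
      obtain ⟨l, rfl, _⟩ := hHmem w hw
      exact hmemP l
    · -- convex position
      intro q hq
      have hvert : ∀ a m c : Fin 10, a + 1 = m → m + 1 = c → a ≠ c →
          q = f m → q ∉ convexHull ℝ
            ((↑({f 0, f 1, f 2, f 3, f 4} : Finset Pt) : Set Pt) \ {q}) := by
        intro a m c ham hmc hac hqm
        subst hqm
        apply vertex_not_in_hull (f a) (f m) (f c) σ
        intro z hz
        obtain ⟨hzH, hzm⟩ := hz
        obtain ⟨l, rfl, _⟩ := hHmem z hzH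
        have hlm : l ≠ m := by
          intro h; rw [h] at hzm; exact hzm rfl
        have t1 : 0 ≤ σ * det2 (f a) (f m) (f l) := by
          have := hedge_nonneg a l
          rwa [ham] at this
        have t2 : 0 ≤ σ * det2 (f m) (f c) (f l) := by
          have := hedge_nonneg m l
          rwa [hmc] at this
        have key : 0 < σ * det2 (f a) (f m) (f l) ∨ 0 < σ * det2 (f m) (f c) (f l) := by
          by_cases hla : l = a
          · right
            subst hla
            have := hedgeAll m l hlm (by rw [hmc]; intro h; exact hac h)
            rwa [hmc] at this
          · left
            have := hedgeAll a l hla (by rw [ham]; exact hlm)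
            rwa [ham] at this
        rcases key with h | h <;> nlinarith
      simp only [Finset.coe_insert, Finset.coe_singleton, Set.mem_insert_iff,
        Set.mem_singleton_iff] at hq
      rcases hq with rfl | rfl | rfl | rfl | rfl
      · exact hvert 9 0 1 (by decide) (by decide) (by decide) rfl
      · exact hvert 0 1 2 (by decide) (by decide) (by decide) rfl
      · exact hvert 1 2 3 (by decide) (by decide) (by decide) rfl
      · exact hvert 2 3 4 (by decide) (by decide) (by decide) rfl
      · exact hvert 3 4 5 (by decide) (by decide) (by decide) rfl
    · -- no point of P interior
      intro z hz
      by_cases hzp : z = p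
      · subst hzp
        intro hint
        exact face_not_mem (f 0) (f (0+1)) σ _ (hsH 0) z hp01 (interior_subset hint)
      · obtain ⟨k, rfl⟩ := hPmem z hz hzp
        by_cases hk4 : k.val ≤ 4
        · -- vertex of the pentagon: on the boundary
          have hcases : k = 0 ∨ k = 1 ∨ k = 2 ∨ k = 3 ∨ k = 4 := by omega
          rcases hcases with rfl | rfl | rfl | rfl | rfl
          · apply face_not_interior (f 0) (f (0+1)) σ hσpm (hfne 0 (0+1) (by decide)) _ (hsH 0)
            rw [det2_aba, mul_zero]
          · apply face_not_interior (f 0) (f (0+1)) σ hσpm (hfne 0 (0+1) (by decide)) _ (hsH 0)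
            rw [show (0:Fin 10)+1 = 1 by decide, det2_abb, mul_zero]
          · apply face_not_interior (f 1) (f (1+1)) σ hσpm (hfne 1 (1+1) (by decide)) _ (hsH 1)
            rw [show (1:Fin 10)+1 = 2 by decide, det2_abb, mul_zero]
          · apply face_not_interior (f 2) (f (2+1)) σ hσpm (hfne 2 (2+1) (by decide)) _ (hsH 2)
            rw [show (2:Fin 10)+1 = 3 by decide, det2_abb, mul_zero]
          · apply face_not_interior (f 3) (f (3+1)) σ hσpm (hfne 3 (3+1) (by decide)) _ (hsH 3)
            rw [show (3:Fin 10)+1 = 4 by decide, det2_abb, mul_zero]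
        · -- outside the pentagon altogether
          intro hint
          apply face_not_mem (f 4) (f 0) σ _ hs40 (f k) ?_ (interior_subset hint)
          have hk4' : (4 : Fin 10) < k := by omega
          have := hE1 0 4 k (by decide) hk4'
          rw [det2_cyc (f 4) (f 0) (f k), det2_swap (f 0) (f k) (f 4)]
          linarith
  -- ########## goal 3: empty triangle
  have goal3 : ∀ z ∈ (↑P : Set Pt), z ∈ convexHull ℝ ({p, f 0, f 1} : Set Pt) →
      z ∈ ({p, f 0, f 1} : Set Pt) := by
    intro z hz hmem
    by_cases hzp : z = p
    · left; exact hzp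
    · obtain ⟨k, rfl⟩ := hPmem z hz hzp
      by_cases h0 : k = 0
      · right; left; rw [h0]
      · by_cases h1 : k = 1
        · right; right; rw [h1]; rfl
        · exfalso
          have hs3 : ∀ w ∈ ({p, f 0, f 1} : Set Pt), 0 ≤ (-ε) * det2 p (f 1) w := by
            intro w hw
            rcases hw with rfl | rfl | rfl
            · rw [det2_aba, mul_zero]
            · rw [det2_swap p (f 1) (f 0)]
              have := hposF 0 1 (by decide)
              nlinarith
            · rw [det2_abb, mul_zero]
          apply face_not_mem p (f 1) (-ε) _ hs3 (f k) ?_ hmem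
          have hk1 : (1 : Fin 10) < k := by omega
          have := hposF 1 k hk1
          nlinarith
  exact ⟨⟨⟨σ, hσpm, hedgeAll⟩, goal1b⟩, goal2, goal3⟩
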